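/- Let G be a nilpotent group, K a normal subgroup of G that is upper-finite, and suppose K' is upper-finite. Then [K, G] is upper-finite. -/

import Mathlib

/-- A group is upper-finite if every finitely generated quotient of it is finite. -/
def UpperFinite (G : Type*) [Group G] : Prop :=
  ∀ (N : Subgroup G) [N.Normal], Group.FG (G ⧸ N) → Finite (G ⧸ N)

section Helpers

open Subgroup QuotientGroup

/-- FG transfers along MulEquiv. -/
lemma Group.FG.of_mulEquiv {G H : Type*} [Group G] [Group H] (e : G ≃* H)
    (hG : Group.FG G) : Group.FG H := by
  haveI := hG
  exact Group.fg_of_surjective (f := e.toMonoidHom) e.surjective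

/-- Upper-finiteness passes along surjective homomorphisms. -/
lemma UpperFinite.of_surjective {G H : Type*} [Group G] [Group H] (hG : UpperFinite G)
    (f : G →* H) (hf : Function.Surjective f) : UpperFinite H := by
  intro N _ hfg
  set φ := (QuotientGroup.mk' N).comp f with hφdef
  have hφ : Function.Surjective φ := (QuotientGroup.mk'_surjective N).comp hf
  let e := QuotientGroup.quotientKerEquivOfSurjective φ hφ
  have h1 : Group.FG (G ⧸ φ.ker) := hfg.of_mulEquiv e.symm
  have h2 : Finite (G ⧸ φ.ker) := hG φ.ker h1
  exact Finite.of_equiv _ e.toEquiv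

lemma UpperFinite.of_mulEquiv {G H : Type*} [Group G] [Group H] (e : G ≃* H)
    (hG : UpperFinite G) : UpperFinite H :=
  hG.of_surjective e.toMonoidHom e.surjective

/-- Subgroups of finitely generated commutative groups are finitely generated. -/
lemma Group.FG.subgroup_fg {Q : Type*} [CommGroup Q] [Group.FG Q] (S : Subgroup Q) :
    Group.FG ↥S := by
  haveI : AddGroup.FG (Additive Q) := GroupFG.iff_add_fg.mp ‹_›
  haveI : Module.Finite ℤ (Additive Q) := Module.Finite.iff_addGroup_fg.mpr ‹_›
  haveI : IsNoetherian ℤ (Additive Q) := isNoetherian_of_isNoetherianRing_of_finite ℤ _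
  have h1 : (AddSubgroup.toIntSubmodule S.toAddSubgroup).FG :=
    IsNoetherian.noetherian _
  have h2 : S.toAddSubgroup.FG := (Submodule.fg_iff_addSubgroup_fg _).mp h1
  have h3 : S.FG := (Subgroup.fg_iff_add_fg S).mpr h2
  exact (Group.fg_iff_subgroup_fg S).mpr h3

/-- Extension of upper-finite by upper-finite is upper-finite. -/
lemma UpperFinite.extension {H : Type*} [Group H] (N : Subgroup H) [N.Normal]
    (hN : UpperFinite ↥N) (hQ : UpperFinite (H ⧸ N)) : UpperFinite H := by
  intro M _ hfg
  haveI := hfg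
  set P := N ⊔ M with hP
  haveI hPn : P.Normal := by rw [hP]; infer_instance
  -- H ⧸ P is finitely generated (as image of H ⧸ M)
  have hsurj : Function.Surjective (QuotientGroup.map M P (MonoidHom.id H) le_sup_right) := by
    intro x
    obtain ⟨h, rfl⟩ := QuotientGroup.mk'_surjective P x
    exact ⟨QuotientGroup.mk' M h, rfl⟩
  have hfgP : Group.FG (H ⧸ P) := Group.fg_of_surjective hsurj
  -- H ⧸ P is finite, via quotient of H ⧸ N
  have hfinP : Finite (H ⧸ P) := by
    haveI : (P.map (QuotientGroup.mk' N)).Normal :=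
      Subgroup.Normal.map ‹P.Normal› _ (QuotientGroup.mk'_surjective N)
    have e := QuotientGroup.quotientQuotientEquivQuotient N P le_sup_left
    have hfg' : Group.FG ((H ⧸ N) ⧸ P.map (QuotientGroup.mk' N)) := hfgP.of_mulEquiv e.symm
    have := hQ (P.map (QuotientGroup.mk' N)) hfg'
    exact Finite.of_equiv _ e.toEquiv
  -- T = image of N in H ⧸ M
  set T := N.map (QuotientGroup.mk' M) with hT
  haveI hTn : T.Normal := Subgroup.Normal.map ‹N.Normal› _ (QuotientGroup.mk'_surjective M)
  have hPT : P.map (QuotientGroup.mk' M) = T := by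
    rw [hP, Subgroup.map_sup, hT]
    have : M.map (QuotientGroup.mk' M) = ⊥ := by
      rw [Subgroup.map_eq_bot_iff, QuotientGroup.ker_mk']
    rw [this, sup_bot_eq]
  haveI : (P.map (QuotientGroup.mk' M)).Normal :=
    Subgroup.Normal.map hPn _ (QuotientGroup.mk'_surjective M)
  have e2 : ((H ⧸ M) ⧸ T) ≃* H ⧸ P :=
    (QuotientGroup.quotientMulEquivOfEq hPT.symm).trans
      (QuotientGroup.quotientQuotientEquivQuotient M P le_sup_right)
  have hfinQT : Finite ((H ⧸ M) ⧸ T) := Finite.of_equiv _ e2.symm.toEquiv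
  -- T has finite index, hence is finitely generated
  haveI : T.FiniteIndex := by
    constructor
    rw [Subgroup.index]
    exact Nat.card_ne_zero.mpr ⟨inferInstance, inferInstance⟩
  haveI hTfg : Group.FG ↥T := Subgroup.fg_of_index_ne_zero T
  -- T is a quotient of N, hence finite
  set ψ := (QuotientGroup.mk' M).comp N.subtype with hψ
  have hrange : ψ.range = T := by
    rw [hψ, MonoidHom.range_comp, Subgroup.range_subtype]
  have e3 : (↥N ⧸ ψ.ker) ≃* ↥T :=
    (QuotientGroup.quotientKerEquivRange ψ).trans (MulEquiv.subgroupCongr hrange)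
  have hfinT : Finite ↥T := by
    have : Group.FG (↥N ⧸ ψ.ker) := hTfg.of_mulEquiv e3.symm
    have := hN ψ.ker this
    exact Finite.of_equiv _ e3.toEquiv
  exact Finite.of_equiv _ (Subgroup.groupEquivQuotientProdSubgroup (s := T)).symm

end Helpers

open scoped commutatorElement in
/-- The quotient `[K,G]/([K,K] ∩ [K,G])` is upper-finite whenever `K` is an upper-finite
normal subgroup: it is abelian and generated by torsion elements in any f.g. quotient. -/
lemma quot_upperFinite {G : Type*} [Group G] (K : Subgroup G) [K.Normal] (hK : UpperFinite K) :
    UpperFinite (↥(⁅K, (⊤ : Subgroup G)⁆) ⧸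
      ((⁅K, K⁆).subgroupOf ⁅K, (⊤ : Subgroup G)⁆)) := by
  set H := ⁅K, (⊤ : Subgroup G)⁆ with hH
  set NH := (⁅K, K⁆).subgroupOf H with hNH
  have hHK : H ≤ K := Subgroup.commutator_le_left K ⊤
  intro R _ hfg
  haveI := hfg
  set Q := (↥H ⧸ NH) ⧸ R with hQ
  set π : ↥H →* Q := (QuotientGroup.mk' R).comp (QuotientGroup.mk' NH) with hπ
  have hπs : Function.Surjective π :=
    (QuotientGroup.mk'_surjective R).comp (QuotientGroup.mk'_surjective NH)
  have hker : ∀ x : ↥H, (x : G) ∈ ⁅K, K⁆ → π x = 1 := by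
    intro x hx
    have h0 : x ∈ NH := Subgroup.mem_subgroupOf.mpr hx
    have h1 : (QuotientGroup.mk' NH) x = 1 := (QuotientGroup.eq_one_iff _).mpr h0
    rw [hπ, MonoidHom.comp_apply, h1, map_one]
  have hcomm : ∀ a b : Q, a * b = b * a := by
    intro a b
    obtain ⟨x, rfl⟩ := hπs a
    obtain ⟨y, rfl⟩ := hπs b
    rw [← commutatorElement_eq_one_iff_mul_comm, ← map_commutatorElement]
    apply hker
    have hcoe : ((⁅x, y⁆ : ↥H) : G) = ⁅(x : G), (y : G)⁆ := rfl
    rw [hcoe]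
    exact Subgroup.commutator_mem_commutator (hHK x.2) (hHK y.2)
  letI cg : CommGroup Q := { (inferInstance : Group Q) with mul_comm := hcomm }
  -- every `π ⟨⁅k,g⁆, _⟩` is a torsion element
  have key : ∀ (g k : G) (hk : k ∈ K) (hm : ⁅k, g⁆ ∈ H),
      IsOfFinOrder (π ⟨⁅k, g⁆, hm⟩) := by
    intro g
    have hmem : ∀ k : ↥K, ⁅(k : G), g⁆ ∈ H := fun k =>
      Subgroup.commutator_mem_commutator k.2 (Subgroup.mem_top g)
    have hmul : ∀ k₁ k₂ : ↥K,
        π ⟨⁅((k₁ * k₂ : ↥K) : G), g⁆, hmem _⟩ =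
          π ⟨⁅(k₁ : G), g⁆, hmem k₁⟩ * π ⟨⁅(k₂ : G), g⁆, hmem k₂⟩ := by
      intro k₁ k₂
      have hc : (k₁ : G) * ⁅(k₂ : G), g⁆ * (k₁ : G)⁻¹ ∈ H :=
        (by infer_instance : H.Normal).conj_mem _ (hmem k₂) _
      have heq : (⟨⁅((k₁ * k₂ : ↥K) : G), g⁆, hmem _⟩ : ↥H)
          = (⟨(k₁ : G) * ⁅(k₂ : G), g⁆ * (k₁ : G)⁻¹, hc⟩ : ↥H) *
            ⟨⁅(k₁ : G), g⁆, hmem k₁⟩ := by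
        apply Subtype.ext
        push_cast
        simp only [commutatorElement_def]
        group
      rw [heq, map_mul]
      have h2 : π (⟨(k₁ : G) * ⁅(k₂ : G), g⁆ * (k₁ : G)⁻¹, hc⟩ : ↥H)
          = π ⟨⁅(k₂ : G), g⁆, hmem k₂⟩ := by
        rw [← mul_inv_eq_one, ← map_inv, ← map_mul]
        apply hker
        have hcoe : (((⟨(k₁ : G) * ⁅(k₂ : G), g⁆ * (k₁ : G)⁻¹, hc⟩ : ↥H) *
            (⟨⁅(k₂ : G), g⁆, hmem k₂⟩ : ↥H)⁻¹ : ↥H) : G)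
            = ⁅(k₁ : G), ⁅(k₂ : G), g⁆⁆ := by
          push_cast
          simp only [commutatorElement_def]
        rw [hcoe]
        exact Subgroup.commutator_mem_commutator k₁.2 (hHK (hmem k₂))
      rw [h2]
      exact hcomm _ _
    set ψ : ↥K →* Q := MonoidHom.mk' (fun k => π ⟨⁅(k : G), g⁆, hmem k⟩) hmul with hψ
    haveI hfgR : Group.FG ↥ψ.range := Group.FG.subgroup_fg _
    have hfinq : Finite (↥K ⧸ ψ.ker) := by
      have e := QuotientGroup.quotientKerEquivRange ψ
      have : Group.FG (↥K ⧸ ψ.ker) := hfgR.of_mulEquiv e.symm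
      exact hK ψ.ker this
    intro k hk hm
    have hψk : π ⟨⁅k, g⁆, hm⟩ =
        (QuotientGroup.kerLift ψ) (QuotientGroup.mk (⟨k, hk⟩ : ↥K)) := by
      rw [QuotientGroup.kerLift_mk]
      rfl
    rw [hψk]
    exact (QuotientGroup.kerLift ψ).isOfFinOrder (isOfFinOrder_of_finite _)
  -- hence Q is torsion
  have htor : Monoid.IsTorsion Q := by
    intro q
    obtain ⟨x, rfl⟩ := hπs q
    have hle : H ≤ ((CommGroup.torsion Q).comap π).map H.subtype := by
      conv_lhs => rw [hH]
      apply Subgroup.commutator_le.mpr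
      intro k hk g' hg'
      exact ⟨⟨⁅k, g'⁆, hH ▸ Subgroup.commutator_mem_commutator hk hg'⟩,
        (CommGroup.mem_torsion _).mpr (key g' k hk _), rfl⟩
    obtain ⟨y, hy, hyx⟩ := hle x.2
    have hxy : y = x := Subtype.ext hyx
    rw [hxy] at hy
    exact (CommGroup.mem_torsion _).mp hy
  exact CommGroup.finite_of_fg_torsion Q htor

/-- if `K` is an upper-finite normal subgroup of a nilpotent group `G`
and `K' = [K,K]` is upper-finite, then `[K,G]` is upper-finite. -/
theorem stmt_14 (G : Type) [Group G] (hnil : Group.IsNilpotent G)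
    (K : Subgroup G) [K.Normal] (hK : UpperFinite K)
    (hK' : UpperFinite (commutator K)) :
    UpperFinite ↥(⁅K, (⊤ : Subgroup G)⁆) := by
  classical
  set H := ⁅K, (⊤ : Subgroup G)⁆ with hH
  set NH := (⁅K, K⁆).subgroupOf H with hNH
  refine UpperFinite.extension NH ?_ ?_
  · -- ↥NH is upper-finite, being isomorphic to K'
    have hle : ⁅K, K⁆ ≤ H := Subgroup.commutator_mono le_rfl le_top
    have hmap : (commutator ↥K).map K.subtype = ⁅K, K⁆ := by
      rw [commutator_def, Subgroup.map_commutator, ← MonoidHom.range_eq_map,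
        Subgroup.range_subtype]
    have e1 : ↥(commutator ↥K) ≃* ↥((commutator ↥K).map K.subtype) :=
      Subgroup.equivMapOfInjective _ _ K.subtype_injective
    have e2 : ↥((commutator ↥K).map K.subtype) ≃* ↥(⁅K, K⁆ : Subgroup G) :=
      MulEquiv.subgroupCongr hmap
    have e3 : ↥(⁅K, K⁆ : Subgroup G) ≃* ↥NH :=
      (Subgroup.subgroupOfEquivOfLe hle).symm
    exact ((hK'.of_mulEquiv e1).of_mulEquiv e2).of_mulEquiv e3
  · exact quot_upperFinite K hK
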